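/- Let X be a Banach space such that the Fourier transform 𝓕 : L²(ℚ_p, X) → L²(ℚ_p, X) is bounded. Then there exists C₁ > 0 such that for every N ≥ 1 and x_0, …, x_{p^{2N}−1} ∈ X: Σ_k ‖x_k‖² ≤ C₁ ∫_{ℤ_p} ‖Σ_{k=0}^{p^{2N}−1} χ_p(kt/p^{2N}) x_k‖² dt. -/

import Mathlib

open MeasureTheory Metric Finset
open scoped ENNReal NNReal Classical

noncomputable def padicDigit {p : ℕ} [Fact p.Prime] (x : ℤ_[p]) (k : ℕ) : ℕ :=
  x.appr (k+1) / p^k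

noncomputable def padicTau {p : ℕ} [Fact p.Prime] (x : ℤ_[p]) : ℝ :=
  ∑' k : ℕ, (padicDigit x k : ℝ) / (p:ℝ)^(k+1)

noncomputable def padicFrac {p : ℕ} [Fact p.Prime] (x : ℚ_[p]) : ℚ :=
  if h : ‖x * (p:ℚ_[p])^((-x.valuation).toNat)‖ ≤ 1 then
    ((PadicInt.appr (⟨x * (p:ℚ_[p])^((-x.valuation).toNat), h⟩ : ℤ_[p]) ((-x.valuation).toNat) : ℚ)
      / (p:ℚ)^((-x.valuation).toNat))
  else 0

noncomputable def padicChar {p : ℕ} [Fact p.Prime] (x : ℚ_[p]) : ℂ :=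
  Complex.exp (2 * Real.pi * Complex.I * ((padicFrac x : ℚ) : ℂ))

def IsHilbertizable (X : Type*) [NormedAddCommGroup X] [NormedSpace ℂ X] : Prop :=
  ∃ (H : Type) (_ : NormedAddCommGroup H) (_ : InnerProductSpace ℂ H) (_ : CompleteSpace H),
    Nonempty (X ≃L[ℂ] H)

noncomputable def rademacherZp {p : ℕ} [Fact p.Prime] (i : ℕ) (t : ℤ_[p]) : ℝ :=
  Real.sign (Real.sin (2^i * Real.pi * padicTau t))

noncomputable def padicFourier {p : ℕ} [Fact p.Prime] [MeasurableSpace ℚ_[p]]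
    (μ : Measure ℚ_[p]) {X : Type*} [NormedAddCommGroup X] [NormedSpace ℂ X]
    (f : ℚ_[p] → X) : ℚ_[p] → X :=
  fun s => ∫ t, padicChar (s * t) • f t ∂μ

section Aux

variable {p : ℕ} [hp : Fact p.Prime]

lemma padicFrac_spec (x : ℚ_[p]) : ∃ (a n : ℕ),
    padicFrac x = (a:ℚ)/(p:ℚ)^n ∧ ‖x - (a : ℚ_[p])/(p:ℚ_[p])^n‖ ≤ 1 := by
  have hpR : (1:ℝ) < p := by exact_mod_cast hp.out.one_lt
  have hp0 : ((p:ℚ_[p]))^((-x.valuation).toNat) ≠ 0 := by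
    apply pow_ne_zero; exact_mod_cast hp.out.ne_zero
  have h : ‖x * (p:ℚ_[p])^((-x.valuation).toNat)‖ ≤ 1 := by
    rcases eq_or_ne x 0 with rfl | hx
    · simp
    · rw [norm_mul, Padic.norm_p_pow, Padic.norm_eq_zpow_neg_valuation hx,
        ← zpow_add₀ (by positivity : (p:ℝ) ≠ 0)]
      calc (p:ℝ) ^ (-x.valuation + -((-x.valuation).toNat:ℤ))
          ≤ (p:ℝ)^(0:ℤ) := by
            apply zpow_le_zpow_right₀ (le_of_lt hpR)
            have := Int.self_le_toNat (-x.valuation)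
            omega
        _ = 1 := zpow_zero _
  set n := (-x.valuation).toNat with hn
  set z : ℤ_[p] := ⟨x * (p:ℚ_[p])^n, h⟩ with hz
  refine ⟨z.appr n, n, ?_, ?_⟩
  · rw [padicFrac, dif_pos h]
  · obtain ⟨w, hw⟩ := Ideal.mem_span_singleton'.mp (PadicInt.appr_spec n z)
    have hcoe : (x * (p:ℚ_[p])^n) - (z.appr n : ℚ_[p]) = (w : ℚ_[p]) * (p:ℚ_[p])^n := by
      have := congrArg (PadicInt.Coe.ringHom (p := p)) hw
      push_cast at this ⊢
      exact this.symm
    have heq : x - (z.appr n : ℚ_[p])/(p:ℚ_[p])^n = (w : ℚ_[p]) := by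
      field_simp at hcoe ⊢
      linear_combination hcoe
    rw [heq]
    exact w.2

lemma rep_diff_int (a b : ℤ) (n m : ℕ)
    (h : ‖(a : ℚ_[p])/(p:ℚ_[p])^n - (b:ℚ_[p])/(p:ℚ_[p])^m‖ ≤ 1) :
    ∃ k : ℤ, a * p^m - b * p^n = k * p^(n+m) := by
  have hp0 : ((p:ℚ_[p])) ≠ 0 := by exact_mod_cast hp.out.ne_zero
  have key : ((a * p^m - b * p^n : ℤ) : ℚ_[p])
      = ((a : ℚ_[p])/(p:ℚ_[p])^n - (b:ℚ_[p])/(p:ℚ_[p])^m) * (p:ℚ_[p])^(n+m) := by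
    field_simp
    push_cast
    ring
  have hnorm : ‖((a * p^m - b * p^n : ℤ) : ℚ_[p])‖ ≤ (p:ℝ)^(-(n+m):ℤ) := by
    rw [key, norm_mul, Padic.norm_p_pow]
    calc _ ≤ 1 * (p:ℝ)^(-(n+m:ℕ):ℤ) := by
          apply mul_le_mul_of_nonneg_right h (by positivity)
      _ = _ := one_mul _
  obtain ⟨k, hk⟩ := (Padic.norm_int_le_pow_iff_dvd _ _).mp hnorm
  exact ⟨k, by linarith [hk]⟩

set_option maxHeartbeats 1000000 in
lemma padicChar_eq (x : ℚ_[p]) (a : ℤ) (n : ℕ)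
    (h : ‖x - (a : ℚ_[p])/(p:ℚ_[p])^n‖ ≤ 1) :
    padicChar x = Complex.exp (2 * Real.pi * Complex.I * ((a : ℂ) / (p:ℂ)^n)) := by
  obtain ⟨b, m, hfrac, hb⟩ := padicFrac_spec x
  have hdiff : ‖(a : ℚ_[p])/(p:ℚ_[p])^n - (b:ℚ_[p])/(p:ℚ_[p])^m‖ ≤ 1 := by
    have h1 : (a : ℚ_[p])/(p:ℚ_[p])^n - (b:ℚ_[p])/(p:ℚ_[p])^m
        = ((a : ℚ_[p])/(p:ℚ_[p])^n - x) + (x - (b:ℚ_[p])/(p:ℚ_[p])^m) := by ring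
    rw [h1]
    refine le_trans (Padic.nonarchimedean _ _) (max_le ?_ hb)
    rwa [norm_sub_rev] at h
  obtain ⟨k, hk⟩ := rep_diff_int a (b:ℤ) n m (by push_cast; exact hdiff)
  have hpC : ((p:ℂ)) ≠ 0 := by exact_mod_cast hp.out.ne_zero
  have hC : ((a:ℂ)/(p:ℂ)^n) = (b:ℂ)/(p:ℂ)^m + (k:ℂ) := by
    have : ((a * p^m - b * p^n : ℤ) : ℂ) = ((k * p^(n+m) : ℤ) : ℂ) := by
      exact_mod_cast congrArg (fun z : ℤ => (z : ℂ)) hk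
    push_cast at this
    field_simp
    linear_combination this
  rw [padicChar, hfrac]
  push_cast
  rw [hC, mul_add, Complex.exp_add]
  have hone : Complex.exp (2 * Real.pi * Complex.I * (k:ℂ)) = 1 := by
    rw [show (2 * Real.pi * Complex.I * (k:ℂ)) = (k:ℤ) * (2 * Real.pi * Complex.I) by
      push_cast; ring]
    exact Complex.exp_int_mul_two_pi_mul_I k
  rw [hone, mul_one]

lemma padicChar_norm (x : ℚ_[p]) : ‖padicChar x‖ = 1 := by
  rw [padicChar, show (2 * Real.pi * Complex.I * ((padicFrac x : ℚ) : ℂ))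
    = ((2 * Real.pi * (padicFrac x : ℝ) : ℝ) : ℂ) * Complex.I by push_cast; ring]
  exact Complex.norm_exp_ofReal_mul_I _

lemma padicChar_eq_one (x : ℚ_[p]) (h : ‖x‖ ≤ 1) : padicChar x = 1 := by
  have h0 : ‖x - ((0:ℤ) : ℚ_[p])/(p:ℚ_[p])^0‖ ≤ 1 := by simpa using h
  rw [padicChar_eq x 0 0 h0]
  simp

lemma padicChar_add (x y : ℚ_[p]) : padicChar (x + y) = padicChar x * padicChar y := by
  have hpQ : ((p:ℚ_[p])) ≠ 0 := by exact_mod_cast hp.out.ne_zero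
  have hpC : ((p:ℂ)) ≠ 0 := by exact_mod_cast hp.out.ne_zero
  obtain ⟨a, n, -, hxa⟩ := padicFrac_spec x
  obtain ⟨b, m, -, hyb⟩ := padicFrac_spec y
  have hx' : ‖x - ((a:ℤ) : ℚ_[p])/(p:ℚ_[p])^n‖ ≤ 1 := by push_cast; exact hxa
  have hy' : ‖y - ((b:ℤ) : ℚ_[p])/(p:ℚ_[p])^m‖ ≤ 1 := by push_cast; exact hyb
  have hsum : ‖(x + y) - (((a * p^m + b * p^n : ℤ)) : ℚ_[p])/(p:ℚ_[p])^(n+m)‖ ≤ 1 := by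
    have hid : (x + y) - (((a * p^m + b * p^n : ℤ)) : ℚ_[p])/(p:ℚ_[p])^(n+m)
        = (x - ((a:ℤ) : ℚ_[p])/(p:ℚ_[p])^n) + (y - ((b:ℤ) : ℚ_[p])/(p:ℚ_[p])^m) := by
      field_simp
      push_cast
      ring
    rw [hid]
    exact le_trans (Padic.nonarchimedean _ _) (max_le hx' hy')
  rw [padicChar_eq _ _ _ hsum, padicChar_eq _ _ _ hx', padicChar_eq _ _ _ hy', ← Complex.exp_add]
  congr 1
  push_cast
  field_simp
  ring

lemma padicChar_congr {x y : ℚ_[p]} (h : ‖x - y‖ ≤ 1) : padicChar x = padicChar y := by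
  obtain ⟨b, m, -, hyb⟩ := padicFrac_spec y
  have hy' : ‖y - ((b:ℤ) : ℚ_[p])/(p:ℚ_[p])^m‖ ≤ 1 := by push_cast; exact hyb
  have hx' : ‖x - ((b:ℤ) : ℚ_[p])/(p:ℚ_[p])^m‖ ≤ 1 := by
    have hid : x - ((b:ℤ) : ℚ_[p])/(p:ℚ_[p])^m
        = (x - y) + (y - ((b:ℤ) : ℚ_[p])/(p:ℚ_[p])^m) := by ring
    rw [hid]
    exact le_trans (Padic.nonarchimedean _ _) (max_le h hy')
  rw [padicChar_eq _ _ _ hx', padicChar_eq _ _ _ hy']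

lemma padicChar_continuous : Continuous (padicChar (p := p)) := by
  rw [continuous_iff_continuousAt]
  intro x
  have hev : ∀ᶠ y in nhds x, padicChar y = padicChar x := by
    filter_upwards [Metric.ball_mem_nhds x one_pos] with y hy
    exact padicChar_congr (le_of_lt (by simpa [dist_eq_norm] using hy))
  exact Filter.EventuallyEq.continuousAt hev

lemma exists_char_ne_one_aux : ∀ (n : ℕ) (c : ℤ) (a : ℚ_[p]), 1 < ‖a‖ →
    ‖a - (c : ℚ_[p])/(p:ℚ_[p])^n‖ ≤ 1 → ∃ u : ℚ_[p], ‖u‖ ≤ 1 ∧ padicChar (a * u) ≠ 1 := by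
  intro n
  induction n with
  | zero =>
    intro c a ha h
    exfalso
    have : ‖a‖ ≤ 1 := by
      have hid : a = (a - (c : ℚ_[p])/(p:ℚ_[p])^0) + (c : ℚ_[p])/(p:ℚ_[p])^0 := by ring
      rw [hid]
      refine le_trans (Padic.nonarchimedean _ _) (max_le h ?_)
      simpa using Padic.norm_int_le_one c
    linarith
  | succ n ih =>
    intro c a ha h
    by_cases hdvd : (p:ℤ) ∣ c
    · obtain ⟨c₁, rfl⟩ := hdvd
      refine ih c₁ a ha ?_
      have heq : (((p:ℤ) * c₁ : ℤ) : ℚ_[p])/(p:ℚ_[p])^(n+1) = (c₁ : ℚ_[p])/(p:ℚ_[p])^n := by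
        have hpQ : ((p:ℚ_[p])) ≠ 0 := by exact_mod_cast hp.out.ne_zero
        push_cast
        field_simp
        ring
      rwa [heq] at h
    · refine ⟨(p:ℚ_[p])^n, ?_, ?_⟩
      · rw [Padic.norm_p_pow]
        exact zpow_le_one_of_nonpos₀ (by exact_mod_cast hp.out.one_le) (by omega)
      · have hrep : ‖a * (p:ℚ_[p])^n - (c : ℚ_[p])/(p:ℚ_[p])^1‖ ≤ 1 := by
          have hpQ : ((p:ℚ_[p])) ≠ 0 := by exact_mod_cast hp.out.ne_zero
          have hid : a * (p:ℚ_[p])^n - (c : ℚ_[p])/(p:ℚ_[p])^1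
              = (a - (c : ℚ_[p])/(p:ℚ_[p])^(n+1)) * (p:ℚ_[p])^n := by
            field_simp
            ring
          rw [hid, norm_mul, Padic.norm_p_pow]
          calc ‖a - (c:ℚ_[p])/(p:ℚ_[p])^(n+1)‖ * ((p:ℝ))^(-n:ℤ)
              ≤ 1 * 1 := by
                apply mul_le_mul h ?_ (by positivity) zero_le_one
                exact zpow_le_one_of_nonpos₀ (by exact_mod_cast hp.out.one_le) (by omega)
            _ = 1 := one_mul 1
        rw [padicChar_eq _ _ _ hrep]
        intro heq
        obtain ⟨k, hk⟩ := Complex.exp_eq_one_iff.mp heq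
        have h2πI : (2 * (Real.pi:ℂ) * Complex.I) ≠ 0 := by
          simp [Real.pi_ne_zero, Complex.I_ne_zero]
        have hpC : ((p:ℂ)) ≠ 0 := by exact_mod_cast hp.out.ne_zero
        have hck : (c:ℂ) = (k:ℂ) * (p:ℂ) := by
          have h1 : (2 * (Real.pi:ℂ) * Complex.I) * ((c:ℂ)/(p:ℂ)^1)
              = (2 * (Real.pi:ℂ) * Complex.I) * ((k:ℂ)) := by
            rw [hk]; push_cast; ring
          have h3 := mul_left_cancel₀ h2πI h1
          field_simp at h3
          rw [h3, mul_comm]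
        have : c = k * p := by exact_mod_cast hck
        exact hdvd ⟨k, by linarith⟩

lemma exists_char_ne_one {a : ℚ_[p]} (ha : 1 < ‖a‖) :
    ∃ u : ℚ_[p], ‖u‖ ≤ 1 ∧ padicChar (a * u) ≠ 1 := by
  obtain ⟨b, m, -, hb⟩ := padicFrac_spec a
  exact exists_char_ne_one_aux m b a ha (by push_cast; exact hb)

section Meas
variable [MeasurableSpace ℚ_[p]] [BorelSpace ℚ_[p]]
  (μ : Measure ℚ_[p]) [μ.IsAddHaarMeasure]

lemma char_setIntegral (hμ : μ (closedBall 0 1) = 1) (a : ℚ_[p]) :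
    ∫ t in closedBall (0:ℚ_[p]) 1, padicChar (a * t) ∂μ
      = if ‖a‖ ≤ 1 then 1 else 0 := by
  have hsm : MeasurableSet (closedBall (0:ℚ_[p]) 1) := measurableSet_closedBall
  split_ifs with ha
  · rw [setIntegral_congr_fun hsm (g := fun _ => (1:ℂ)) ?_]
    · rw [setIntegral_const, measureReal_def, hμ]; simp
    · intro t ht
      simp only [mem_closedBall, dist_zero_right] at ht
      exact padicChar_eq_one _ (by
        rw [norm_mul]
        exact mul_le_one₀ ha (norm_nonneg _) ht)
  · push_neg at ha
    obtain ⟨u, hu, hne⟩ := exists_char_ne_one ha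
    set g : ℚ_[p] → ℂ := (closedBall (0:ℚ_[p]) 1).indicator (fun t => padicChar (a * t)) with hg
    have hmem : ∀ t : ℚ_[p], t + u ∈ closedBall (0:ℚ_[p]) 1 ↔ t ∈ closedBall (0:ℚ_[p]) 1 := by
      intro t
      simp only [mem_closedBall, dist_zero_right]
      constructor
      · intro h
        calc ‖t‖ = ‖(t + u) + (-u)‖ := by ring_nf
          _ ≤ max ‖t + u‖ ‖-u‖ := Padic.nonarchimedean _ _
          _ ≤ 1 := max_le h (by simpa using hu)
      · intro h
        exact le_trans (Padic.nonarchimedean t u) (max_le h hu)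
    have hshift : ∀ t, g (t + u) = padicChar (a * u) * g t := by
      intro t
      by_cases ht : t ∈ closedBall (0:ℚ_[p]) 1
      · rw [hg, Set.indicator_of_mem ((hmem t).mpr ht), Set.indicator_of_mem ht]
        rw [show a * (t + u) = a * t + a * u by ring, padicChar_add]
        ring
      · rw [hg, Set.indicator_of_notMem (fun hc => ht ((hmem t).mp hc)),
          Set.indicator_of_notMem ht, mul_zero]
    have hinv : ∫ t, g (t + u) ∂μ = ∫ t, g t ∂μ := integral_add_right_eq_self g u
    have hkey : padicChar (a * u) * ∫ t, g t ∂μ = ∫ t, g t ∂μ := by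
      rw [← integral_const_mul, ← hinv]
      exact integral_congr_ae (Filter.Eventually.of_forall fun t => (hshift t).symm)
    have hzero : ∫ t, g t ∂μ = 0 := by
      by_contra hI
      exact hne (mul_right_cancel₀ hI (by rwa [one_mul]))
    rw [← integral_indicator hsm]
    exact hzero

end Meas
end Aux

lemma sq_enorm {E : Type*} [NormedAddCommGroup E] (v : E) :
    (‖v‖₊ : ℝ≥0∞)^(2:ℝ) = ENNReal.ofReal (‖v‖^2) := by
  rw [ENNReal.ofReal_pow (norm_nonneg v), ofReal_norm, enorm_eq_nnnorm,
    show ((2:ℝ)) = ((2:ℕ):ℝ) by norm_num, ENNReal.rpow_natCast]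

set_option maxHeartbeats 2000000 in
theorem stmt16 {p : ℕ} [Fact p.Prime] [MeasurableSpace ℚ_[p]] [BorelSpace ℚ_[p]]
    (μ : Measure ℚ_[p]) [μ.IsAddHaarMeasure] (hμ : μ (Metric.closedBall 0 1) = 1)
    {X : Type*} [NormedAddCommGroup X] [NormedSpace ℂ X] [CompleteSpace X]
    (C : ℝ)
    (hbd : ∀ f : ℚ_[p] → X, Integrable f μ → MemLp f 2 μ →
      eLpNorm (padicFourier μ f) 2 μ ≤ ENNReal.ofReal C * eLpNorm f 2 μ) :
    ∃ C₁ : ℝ, 0 < C₁ ∧ ∀ (N : ℕ), 1 ≤ N → ∀ x : ℕ → X,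
      ∑ k ∈ Finset.range (p^(2*N)), ‖x k‖^2
        ≤ C₁ * ∫ t in Metric.closedBall (0:ℚ_[p]) 1,
            ‖∑ k ∈ Finset.range (p^(2*N)), padicChar ((k:ℚ_[p]) * t / (p:ℚ_[p])^(2*N)) • x k‖^2 ∂μ := by
  have hpprime : p.Prime := Fact.out
  have hpQ : ((p:ℚ_[p])) ≠ 0 := by exact_mod_cast hpprime.ne_zero
  set C' := max C 1 with hC'
  have hC'pos : (0:ℝ) < C' := lt_of_lt_of_le one_pos (le_max_right _ _)
  refine ⟨C'^2, by positivity, ?_⟩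
  intro N hN x
  set M := p^(2*N) with hM
  set π : ℚ_[p] := (p:ℚ_[p])^(2*N) with hπ
  have hZ : MeasurableSet (closedBall (0:ℚ_[p]) 1) := measurableSet_closedBall
  haveI hfin : IsFiniteMeasure (μ.restrict (closedBall (0:ℚ_[p]) 1)) := by
    constructor
    rw [Measure.restrict_apply_univ, hμ]
    exact ENNReal.one_lt_top
  set F : ℚ_[p] → X := fun t => ∑ k ∈ Finset.range M, padicChar ((k:ℚ_[p]) * t / π) • x k with hF
  have hFcont : Continuous F := by
    apply continuous_finset_sum
    intro k _
    exact (padicChar_continuous.comp ((continuous_const.mul continuous_id).div_const π)).smul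
      continuous_const
  set B : ℝ := ∑ k ∈ Finset.range M, ‖x k‖ with hB
  have hFbd : ∀ t, ‖F t‖ ≤ B := by
    intro t
    refine le_trans (norm_sum_le _ _) (le_of_eq (Finset.sum_congr rfl fun k _ => ?_))
    rw [norm_smul, padicChar_norm, one_mul]
  set f : ℚ_[p] → X := (closedBall (0:ℚ_[p]) 1).indicator F with hf
  have hFae : AEStronglyMeasurable F (μ.restrict (closedBall (0:ℚ_[p]) 1)) :=
    hFcont.aestronglyMeasurable
  have hfm2 : MemLp f 2 μ :=
    (memLp_indicator_iff_restrict hZ).mpr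
      (MemLp.of_bound hFae B (Filter.Eventually.of_forall hFbd))
  have hfint : Integrable f μ :=
    memLp_one_iff_integrable.mp
      ((memLp_indicator_iff_restrict hZ).mpr
        (MemLp.of_bound hFae B (Filter.Eventually.of_forall hFbd)))
  -- the Fourier transform of f
  have hfour : ∀ s, padicFourier μ f s
      = ∑ k ∈ Finset.range M,
          Set.indicator (closedBall (-((k:ℚ_[p])/π)) 1) (fun _ => x k) s := by
    intro s
    have h1 : (fun t => padicChar (s*t) • f t)
        = (closedBall (0:ℚ_[p]) 1).indicator
            (fun t => ∑ k ∈ Finset.range M,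
              (padicChar (s*t) * padicChar ((k:ℚ_[p]) * t / π)) • x k) := by
      funext t
      by_cases ht : t ∈ closedBall (0:ℚ_[p]) 1
      · rw [hf, Set.indicator_of_mem ht, Set.indicator_of_mem ht, hF]
        simp only
        rw [Finset.smul_sum]
        exact Finset.sum_congr rfl fun k _ => smul_smul _ _ _
      · rw [hf, Set.indicator_of_notMem ht, Set.indicator_of_notMem ht, smul_zero]
    have h2 : padicFourier μ f s = ∫ t, padicChar (s*t) • f t ∂μ := rfl
    rw [h2, h1, integral_indicator hZ, integral_finset_sum _ ?_]
    · refine Finset.sum_congr rfl fun k hk => ?_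
      rw [integral_smul_const]
      have h3 : ∀ t : ℚ_[p], padicChar (s*t) * padicChar ((k:ℚ_[p]) * t / π)
          = padicChar ((s + (k:ℚ_[p])/π) * t) := by
        intro t
        rw [← padicChar_add]
        congr 1
        ring
      simp only [h3]
      rw [char_setIntegral μ hμ (s + (k:ℚ_[p])/π)]
      by_cases hball : s ∈ closedBall (-((k:ℚ_[p])/π)) 1
      · rw [Set.indicator_of_mem hball, if_pos, one_smul]
        rwa [mem_closedBall, dist_eq_norm, sub_neg_eq_add] at hball
      · rw [Set.indicator_of_notMem hball, if_neg, zero_smul]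
        rwa [mem_closedBall, dist_eq_norm, sub_neg_eq_add] at hball
    · intro k _
      refine memLp_one_iff_integrable.mp
        (MemLp.of_bound ?_ ‖x k‖ (Filter.Eventually.of_forall fun t => ?_))
      · exact (((padicChar_continuous.comp (continuous_const.mul continuous_id)).mul
          (padicChar_continuous.comp
            ((continuous_const.mul continuous_id).div_const π))).smul
              continuous_const).aestronglyMeasurable
      · rw [norm_smul, norm_mul, padicChar_norm, padicChar_norm, one_mul, one_mul]
  -- disjointness of the balls
  have hdisj : ∀ k ∈ Finset.range M, ∀ j ∈ Finset.range M, ∀ s : ℚ_[p],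
      s ∈ closedBall (-((k:ℚ_[p])/π)) 1 → s ∈ closedBall (-((j:ℚ_[p])/π)) 1 → k = j := by
    intro k hk j hj s hsk hsj
    rw [mem_closedBall, dist_eq_norm, sub_neg_eq_add] at hsk hsj
    have hdiff : ‖(((k:ℤ) - (j:ℤ)) : ℚ_[p]) / π‖ ≤ 1 := by
      have hid : (((k:ℤ) - (j:ℤ)) : ℚ_[p]) / π
          = (s + (k:ℚ_[p])/π) + (-(s + (j:ℚ_[p])/π)) := by push_cast; ring
      rw [hid]
      refine le_trans (Padic.nonarchimedean _ _) (max_le hsk ?_)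
      rwa [norm_neg]
    have hnorm : ‖(((k:ℤ) - (j:ℤ)) : ℚ_[p])‖ ≤ (p:ℝ)^(-(2*N:ℕ):ℤ) := by
      have hπn : ‖π‖ = (p:ℝ)^(-(2*N:ℕ):ℤ) := Padic.norm_p_pow _
      rw [norm_div, div_le_one (by rw [hπn]; exact zpow_pos (by exact_mod_cast hpprime.pos) _), hπn] at hdiff
      calc ‖(((k:ℤ) - (j:ℤ)) : ℚ_[p])‖ ≤ 1 * (p:ℝ)^(-(2*N:ℕ):ℤ) := by rw [one_mul]; exact hdiff
        _ = _ := one_mul _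
    have hdvd : ((p^(2*N) : ℤ)) ∣ ((k:ℤ) - j) := by
      rw [← Padic.norm_int_le_pow_iff_dvd ((k:ℤ) - j) (2*N)]
      push_cast
      exact hnorm
    have habs : |((k:ℤ) - j)| < (p:ℤ)^(2*N) := by
      rw [abs_lt]
      simp only [Finset.mem_range, hM] at hk hj
      constructor
      · have : (j:ℤ) < (p:ℤ)^(2*N) := by exact_mod_cast hj
        omega
      · have : (k:ℤ) < (p:ℤ)^(2*N) := by exact_mod_cast hk
        omega
    have := Int.eq_zero_of_abs_lt_dvd hdvd habs
    omega
  -- measure of unit balls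
  have hball : ∀ c : ℚ_[p], μ (closedBall c 1) = 1 := by
    intro c
    have hpre : closedBall c 1 = (fun t => -c + t) ⁻¹' (closedBall (0:ℚ_[p]) 1) := by
      ext t
      simp only [Set.mem_preimage, mem_closedBall, dist_eq_norm, sub_zero]
      rw [show -c + t = t - c by ring]
    rw [hpre, measure_preimage_add, hμ]
  -- pointwise norm of the Fourier transform
  have hGnorm : ∀ s, (‖padicFourier μ f s‖₊ : ℝ≥0∞)^(2:ℝ)
      = ∑ k ∈ Finset.range M,
          Set.indicator (closedBall (-((k:ℚ_[p])/π)) 1)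
            (fun _ => (‖x k‖₊ : ℝ≥0∞)^(2:ℝ)) s := by
    intro s
    set T := (Finset.range M).filter (fun k : ℕ => s ∈ closedBall (-((k:ℚ_[p])/π)) 1) with hT
    have hGs : padicFourier μ f s = ∑ k ∈ T, x k := by
      rw [hfour s, hT, Finset.sum_filter]
      refine Finset.sum_congr rfl fun k _ => ?_
      by_cases hks : s ∈ closedBall (-((k:ℚ_[p])/π)) 1 <;>
        simp [Set.indicator_apply, hks]
    have hRHS : ∑ k ∈ Finset.range M,
        Set.indicator (closedBall (-((k:ℚ_[p])/π)) 1)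
          (fun _ => (‖x k‖₊ : ℝ≥0∞)^(2:ℝ)) s = ∑ k ∈ T, (‖x k‖₊:ℝ≥0∞)^(2:ℝ) := by
      rw [hT, Finset.sum_filter]
      refine Finset.sum_congr rfl fun k _ => ?_
      by_cases hks : s ∈ closedBall (-((k:ℚ_[p])/π)) 1 <;>
        simp [Set.indicator_apply, hks]
    rw [hRHS, hGs]
    rcases eq_or_ne T ∅ with hT0 | hTne
    · rw [hT0]
      simp
    · obtain ⟨k0, hk0⟩ := Finset.nonempty_of_ne_empty hTne
      have hTeq : T = {k0} := by
        apply Finset.eq_singleton_iff_unique_mem.mpr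
        refine ⟨hk0, fun y hy => ?_⟩
        rw [hT, Finset.mem_filter] at hy
        rw [hT, Finset.mem_filter] at hk0
        exact hdisj y hy.1 k0 hk0.1 s hy.2 hk0.2
      rw [hTeq, Finset.sum_singleton, Finset.sum_singleton]
  -- lintegral of the Fourier transform
  have hlintG : ∫⁻ s, (‖padicFourier μ f s‖₊ : ℝ≥0∞)^(2:ℝ) ∂μ
      = ENNReal.ofReal (∑ k ∈ Finset.range M, ‖x k‖^2) := by
    calc ∫⁻ s, (‖padicFourier μ f s‖₊:ℝ≥0∞)^(2:ℝ) ∂μ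
        = ∫⁻ s, ∑ k ∈ Finset.range M,
            Set.indicator (closedBall (-((k:ℚ_[p])/π)) 1)
              (fun _ => (‖x k‖₊:ℝ≥0∞)^(2:ℝ)) s ∂μ := lintegral_congr hGnorm
      _ = ∑ k ∈ Finset.range M, ∫⁻ s,
            Set.indicator (closedBall (-((k:ℚ_[p])/π)) 1)
              (fun _ => (‖x k‖₊:ℝ≥0∞)^(2:ℝ)) s ∂μ :=
          lintegral_finset_sum _ (fun k _ =>
            measurable_const.indicator measurableSet_closedBall)
      _ = ∑ k ∈ Finset.range M, (‖x k‖₊:ℝ≥0∞)^(2:ℝ) * μ (closedBall (-((k:ℚ_[p])/π)) 1) :=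
          Finset.sum_congr rfl fun k _ =>
            lintegral_indicator_const measurableSet_closedBall _
      _ = ∑ k ∈ Finset.range M, ENNReal.ofReal (‖x k‖^2) := by
          refine Finset.sum_congr rfl fun k _ => ?_
          rw [hball, mul_one, sq_enorm]
      _ = ENNReal.ofReal (∑ k ∈ Finset.range M, ‖x k‖^2) :=
          (ENNReal.ofReal_sum_of_nonneg (fun k _ => sq_nonneg _)).symm
  -- lintegral of f
  have hIint : Integrable (fun t => ‖F t‖^2) (μ.restrict (closedBall (0:ℚ_[p]) 1)) := by
    refine memLp_one_iff_integrable.mp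
      (MemLp.of_bound ((hFcont.norm.pow 2).aestronglyMeasurable) (B^2)
        (Filter.Eventually.of_forall fun t => ?_))
    rw [Real.norm_eq_abs, abs_of_nonneg (sq_nonneg _)]
    exact pow_le_pow_left₀ (norm_nonneg _) (hFbd t) 2
  have hlintf : ∫⁻ t, (‖f t‖₊:ℝ≥0∞)^(2:ℝ) ∂μ
      = ENNReal.ofReal (∫ t in closedBall (0:ℚ_[p]) 1, ‖F t‖^2 ∂μ) := by
    rw [ofReal_integral_eq_lintegral_ofReal hIint
      (Filter.Eventually.of_forall fun t => sq_nonneg _), ← lintegral_indicator hZ]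
    apply lintegral_congr
    intro t
    by_cases ht : t ∈ closedBall (0:ℚ_[p]) 1
    · rw [hf, Set.indicator_of_mem ht, Set.indicator_of_mem ht, sq_enorm]
    · rw [hf, Set.indicator_of_notMem ht, Set.indicator_of_notMem ht]
      simp
  -- put everything together
  have hmain := hbd f hfint hfm2
  rw [eLpNorm_eq_lintegral_rpow_enorm_toReal (by norm_num) (by norm_num),
    eLpNorm_eq_lintegral_rpow_enorm_toReal (by norm_num) (by norm_num)] at hmain
  simp only [ENNReal.toReal_ofNat, enorm_eq_nnnorm] at hmain
  rw [hlintG, hlintf] at hmain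
  set SS : ℝ := ∑ k ∈ Finset.range M, ‖x k‖^2 with hSSdef
  set I : ℝ := ∫ t in closedBall (0:ℚ_[p]) 1, ‖F t‖^2 ∂μ with hI
  have hInn : 0 ≤ I := setIntegral_nonneg hZ (fun t _ => sq_nonneg _)
  have hmain' : (ENNReal.ofReal SS)^((1:ℝ)/2)
      ≤ ENNReal.ofReal C' * (ENNReal.ofReal I)^((1:ℝ)/2) := by
    refine le_trans hmain (mul_le_mul_left ?_ _)
    exact ENNReal.ofReal_le_ofReal (le_max_left _ _)
  have hsq : ENNReal.ofReal SS ≤ ENNReal.ofReal (C'^2 * I) := by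
    have h2 := ENNReal.rpow_le_rpow hmain' (by norm_num : (0:ℝ) ≤ 2)
    rw [← ENNReal.rpow_mul, show (1/2 * 2 : ℝ) = 1 by norm_num, ENNReal.rpow_one,
      ENNReal.mul_rpow_of_nonneg _ _ (by norm_num : (0:ℝ) ≤ 2),
      ← ENNReal.rpow_mul, show (1/2 * 2 : ℝ) = 1 by norm_num, ENNReal.rpow_one,
      ENNReal.ofReal_rpow_of_pos hC'pos] at h2
    calc ENNReal.ofReal SS ≤ ENNReal.ofReal (C' ^ (2:ℝ)) * ENNReal.ofReal I := h2
      _ = ENNReal.ofReal (C'^2 * I) := by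
          rw [← ENNReal.ofReal_mul (Real.rpow_nonneg hC'pos.le _)]
          congr 2
          rw [show ((2:ℝ)) = ((2:ℕ):ℝ) by norm_num, Real.rpow_natCast]
  have hfinal : SS ≤ C'^2 * I :=
    (ENNReal.ofReal_le_ofReal_iff (by positivity)).mp hsq
  exact hfinal
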